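/- Let M be an additive abelian group and S a submonoid of M. Then the following two conditions are equivalent: (1) for every m ∈ M, if 2•m ∈ S and 3•m ∈ S then m ∈ S; (2) for every m ∈ M, if there exists k ∈ ℕ such that k'•m ∈ S for all integers k' > k, then m ∈ S. -/
import Mathlib

/-- A submonoid `S` of an additive abelian group `M` satisfying condition (1)
is called *semisaturated* in `M`. The two conditions are equivalent. -/
theorem semisaturated_iff {M : Type*} [AddCommGroup M] (S : AddSubmonoid M) :
    (∀ m : M, 2 • m ∈ S → 3 • m ∈ S → m ∈ S) ↔
    (∀ m : M, (∃ k : ℕ, ∀ k' : ℕ, k < k' → k' • m ∈ S) → m ∈ S) := by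
  constructor
  · intro h1 m ⟨k, hk⟩
    have key : ∀ k : ℕ, (∀ k' : ℕ, k < k' → k' • m ∈ S) → m ∈ S := by
      intro k
      induction k with
      | zero => intro hk; simpa using hk 1 (by norm_num)
      | succ n ih =>
        intro hk
        apply ih
        intro k' hk'
        rcases eq_or_lt_of_le (Nat.succ_le_of_lt hk') with h | h
        · subst h
          apply h1 ((n+1) • m)
          · rw [smul_smul]
            exact hk _ (by omega)
          · rw [smul_smul]
            exact hk _ (by omega)
        · exact hk _ h
    exact key k hk
  · intro h2 m h2m h3m
    apply h2 m
    refine ⟨1, ?_⟩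
    have key : ∀ n : ℕ, (n + 2) • m ∈ S := by
      intro n
      induction n using Nat.strong_induction_on with
      | _ n ih =>
        match n with
        | 0 => simpa using h2m
        | 1 => simpa using h3m
        | (n+2) =>
          have : (n + 2 + 2) • m = (n + 2) • m + 2 • m := by
            rw [← add_smul]
          rw [this]
          exact S.add_mem (ih n (by omega)) h2m
    intro k' hk'
    obtain ⟨n, rfl⟩ : ∃ n, k' = n + 2 := ⟨k' - 2, by omega⟩
    exact key n
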